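/- Let k ≥ 1 be an integer and σ ∈ {0,1}. The function u(x) = e^{ikx} satisfies C_σ[u] = (k − σ)·e^{ikx}, where C_σ[u](x) = P₊[(1/(4π)) ∫₀^{2π} |u(x)−u(y)|²(u(x)−u(y))/(1−cos(x−y)) dy − σ|u(x)|² u(x)] and P₊ projects a function on the torus onto its Fourier modes with strictly positive frequency. -/

import Mathlib

open Complex Finset intervalIntegral in
private lemma integral_exp_int' (m : ℤ) (x : ℝ) :
    ∫ y in (0:ℝ)..(2*Real.pi), Complex.exp (Complex.I * (m:ℂ) * ((x:ℂ) - (y:ℂ)))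
      = if m = 0 then (2*Real.pi : ℂ) else 0 := by
  have hre : ∀ y : ℝ, Complex.I * (m:ℂ) * ((x:ℂ) - (y:ℂ))
      = Complex.I * m * x + (-(Complex.I*m)) * y := by intro y; ring
  simp_rw [hre, Complex.exp_add, intervalIntegral.integral_const_mul]
  rcases eq_or_ne m 0 with hm | hm
  · simp [hm]
  · have hc : (-(Complex.I*(m:ℂ))) ≠ 0 := by simp [Complex.I_ne_zero, hm]
    rw [integral_exp_mul_complex hc]
    have h1 : Complex.exp (-(Complex.I*(m:ℂ)) * ((2*Real.pi : ℝ):ℂ)) = 1 := by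
      have := Complex.exp_int_mul_two_pi_mul_I (-m)
      rw [show ((-m : ℤ):ℂ) * (2*Real.pi*Complex.I) = -(Complex.I*(m:ℂ)) * ((2*Real.pi:ℝ):ℂ) by push_cast; ring] at this
      exact this
    push_cast at h1 ⊢
    rw [h1]
    simp [hm]

open Complex Finset intervalIntegral in
private lemma alg' (a v A S T : ℂ) (ha : a ≠ 0) (hv : v ≠ 0) (hA : A ≠ 0) (ha1 : a ≠ 1)
    (hS : S = (A-1)/(a-1)) (hT : T = (A⁻¹-1)/(a⁻¹-1)) :
    (v*A - v) * ((v*A)⁻¹ - v⁻¹) * (v*A - v) / (1 - (a + a⁻¹)/2)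
    = 2 * (v*A) * (S * T * (1 - A⁻¹)) := by
  have ha1' : a - 1 ≠ 0 := sub_ne_zero.mpr ha1
  have hai : a⁻¹ - 1 = -(a-1)/a := by field_simp; ring
  have hD : 1 - (a+a⁻¹)/2 = -(a-1)^2/(2*a) := by field_simp; ring
  trans (2*a*v*(A-1)^3/(A*(a-1)^2))
  · rw [hD]
    field_simp
    ring
  · rw [hS, hT, hai]
    field_simp
    ring

lemma alg (a v : ℂ) (k : ℕ) (ha : a ≠ 0) (hv : v ≠ 0) :
    (v*a^k - v) * ((v*a^k)⁻¹ - v⁻¹) * (v*a^k - v) / (1 - (a + a⁻¹)/2)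
    = 2 * (v*a^k) * ((∑ j ∈ Finset.range k, a^j) * (∑ l ∈ Finset.range k, (a⁻¹)^l) * (1 - (a^k)⁻¹)) := by
  rcases eq_or_ne a 1 with ha1 | ha1
  · simp [ha1]
  · have ha1' : a - 1 ≠ 0 := sub_ne_zero.mpr ha1
    have hai : a⁻¹ - 1 = -(a-1)/a := by field_simp; ring
    have hai1 : a⁻¹ - 1 ≠ 0 := by
      rw [hai]; exact div_ne_zero (neg_ne_zero.mpr ha1') ha
    exact alg' a v (a^k) _ _ ha hv (pow_ne_zero _ ha) ha1
      (by rw [eq_div_iff ha1']; exact geom_sum_mul a k)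
      (by rw [eq_div_iff hai1, geom_sum_mul, inv_pow])



open Complex Finset intervalIntegral in
private lemma pointwise (k : ℕ) (x y : ℝ) :
    ((‖(Complex.exp (Complex.I * (k : ℂ) * (x : ℂ))
        - Complex.exp (Complex.I * (k : ℂ) * (y : ℂ)))‖ : ℝ) : ℂ) ^ 2
      * (Complex.exp (Complex.I * (k : ℂ) * (x : ℂ))
        - Complex.exp (Complex.I * (k : ℂ) * (y : ℂ)))
      / (((1 - Real.cos (x - y) : ℝ) : ℂ))
    = 2 * Complex.exp (Complex.I * (k : ℂ) * (x : ℂ)) *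
        ∑ j ∈ Finset.range k, ∑ l ∈ Finset.range k,
          (Complex.exp (Complex.I * ((((j:ℤ) - (l:ℤ)) : ℤ) : ℂ) * ((x:ℂ) - (y:ℂ)))
            - Complex.exp (Complex.I * ((((j:ℤ) - (l:ℤ) - (k:ℤ)) : ℤ) : ℂ) * ((x:ℂ) - (y:ℂ)))) := by
  have ha : Complex.exp (Complex.I * ((x:ℂ) - y)) ≠ 0 := Complex.exp_ne_zero _
  set a := Complex.exp (Complex.I * ((x:ℂ) - y)) with ha_def
  have hv : Complex.exp (Complex.I * (k:ℂ) * y) ≠ 0 := Complex.exp_ne_zero _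
  set v := Complex.exp (Complex.I * (k:ℂ) * y) with hv_def
  have hu : Complex.exp (Complex.I * (k:ℂ) * x) = v * a^k := by
    rw [hv_def, ha_def, ← Complex.exp_nat_mul, ← Complex.exp_add]
    congr 1
    ring
  have habs : ∀ z : ℂ, ((‖z‖ : ℝ) : ℂ)^2 = z * (starRingEnd ℂ) z := by
    intro z
    rw [← Complex.ofReal_pow, Complex.sq_norm, Complex.mul_conj]
  have hcexp : ∀ z : ℂ, (starRingEnd ℂ) (Complex.exp z) = Complex.exp ((starRingEnd ℂ) z) :=
    fun z => (Complex.exp_conj _).symm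
  have hconj : (starRingEnd ℂ) (v * a^k - v) = (v*a^k)⁻¹ - v⁻¹ := by
    rw [← hu, map_sub, hcexp, hcexp, hu, hv_def]
    rw [show (starRingEnd ℂ) (Complex.I * (k:ℂ) * x) = -(Complex.I * (k:ℂ) * x) by
      simp [map_mul, Complex.conj_I, Complex.conj_ofReal]]
    rw [show (starRingEnd ℂ) (Complex.I * (k:ℂ) * y) = -(Complex.I * (k:ℂ) * y) by
      simp [map_mul, Complex.conj_I, Complex.conj_ofReal]]
    rw [Complex.exp_neg, Complex.exp_neg, hu, hv_def]
  have hcos : ((1 - Real.cos (x - y) : ℝ) : ℂ) = 1 - (a + a⁻¹)/2 := by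
    rw [Complex.ofReal_sub, Complex.ofReal_one, Complex.ofReal_cos, Complex.cos]
    rw [show ((x - y : ℝ):ℂ) * Complex.I = Complex.I * ((x:ℂ) - y) by push_cast; ring]
    rw [← Complex.exp_neg]
    rw [show -((x - y:ℝ):ℂ) * Complex.I = -(Complex.I * ((x:ℂ) - y)) by push_cast; ring, ha_def]
  have hz : ∀ m : ℤ, Complex.exp (Complex.I * (m:ℂ) * ((x:ℂ) - y)) = a ^ m := by
    intro m
    rw [show Complex.I * (m:ℂ) * ((x:ℂ) - y) = (m:ℂ) * (Complex.I * ((x:ℂ)-y)) by ring,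
      Complex.exp_int_mul, ha_def]
  have hz1 : ∀ j l : ℕ, a ^ ((j:ℤ) - (l:ℤ)) = a^j * (a⁻¹)^l := by
    intro j l
    rw [zpow_sub₀ ha, zpow_natCast, zpow_natCast, div_eq_mul_inv, inv_pow]
  have hz2 : ∀ j l : ℕ, a ^ ((j:ℤ) - (l:ℤ) - (k:ℤ)) = a^j * (a⁻¹)^l * (a^k)⁻¹ := by
    intro j l
    rw [zpow_sub₀ ha, hz1, zpow_natCast, div_eq_mul_inv]
  have hsum : ∑ j ∈ Finset.range k, ∑ l ∈ Finset.range k, (a^j*(a⁻¹)^l - a^j*(a⁻¹)^l*(a^k)⁻¹)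
      = (∑ j ∈ Finset.range k, a^j) * (∑ l ∈ Finset.range k, (a⁻¹)^l) * (1 - (a^k)⁻¹) := by
    rw [Finset.sum_mul_sum, Finset.sum_mul]
    refine Finset.sum_congr rfl fun j _ => ?_
    rw [Finset.sum_mul]
    refine Finset.sum_congr rfl fun l _ => ?_
    ring
  simp_rw [hz, hz1, hz2, hu, habs, hconj, hcos, hsum]
  exact alg a v k ha hv


open Complex Finset intervalIntegral in
private lemma integral_sum_eval (k : ℕ) (x : ℝ) :
    (∫ y in (0:ℝ)..(2*Real.pi),
      ∑ j ∈ Finset.range k, ∑ l ∈ Finset.range k,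
        (Complex.exp (Complex.I * ((((j:ℤ) - (l:ℤ)) : ℤ) : ℂ) * ((x:ℂ) - (y:ℂ)))
          - Complex.exp (Complex.I * ((((j:ℤ) - (l:ℤ) - (k:ℤ)) : ℤ) : ℂ) * ((x:ℂ) - (y:ℂ)))))
    = (k : ℂ) * (2*Real.pi) := by
  have hint : ∀ m : ℤ, IntervalIntegrable
      (fun y : ℝ => Complex.exp (Complex.I * (m:ℂ) * ((x:ℂ) - (y:ℂ)))) MeasureTheory.volume 0 (2*Real.pi) := by
    intro m
    apply Continuous.intervalIntegrable
    fun_prop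
  have h1 : ∀ j ∈ Finset.range k, IntervalIntegrable
      (fun y : ℝ => ∑ l ∈ Finset.range k,
        (Complex.exp (Complex.I * ((((j:ℤ) - (l:ℤ)) : ℤ) : ℂ) * ((x:ℂ) - (y:ℂ)))
          - Complex.exp (Complex.I * ((((j:ℤ) - (l:ℤ) - (k:ℤ)) : ℤ) : ℂ) * ((x:ℂ) - (y:ℂ)))))
      MeasureTheory.volume 0 (2*Real.pi) :=
    fun j _ => by
      apply Continuous.intervalIntegrable
      apply continuous_finset_sum
      intro l _
      fun_prop
  have h2 : ∀ j l : ℕ, (∫ y in (0:ℝ)..(2*Real.pi),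
        (Complex.exp (Complex.I * ((((j:ℤ) - (l:ℤ)) : ℤ) : ℂ) * ((x:ℂ) - (y:ℂ)))
          - Complex.exp (Complex.I * ((((j:ℤ) - (l:ℤ) - (k:ℤ)) : ℤ) : ℂ) * ((x:ℂ) - (y:ℂ)))))
      = (if ((j:ℤ) - (l:ℤ)) = 0 then (2*Real.pi:ℂ) else 0)
          - (if ((j:ℤ) - (l:ℤ) - (k:ℤ)) = 0 then (2*Real.pi:ℂ) else 0) := by
    intro j l
    rw [intervalIntegral.integral_sub (hint _) (hint _), integral_exp_int', integral_exp_int']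
  rw [intervalIntegral.integral_finset_sum h1]
  have h3 : ∀ j ∈ Finset.range k, (∫ y in (0:ℝ)..(2*Real.pi),
      ∑ l ∈ Finset.range k,
        (Complex.exp (Complex.I * ((((j:ℤ) - (l:ℤ)) : ℤ) : ℂ) * ((x:ℂ) - (y:ℂ)))
          - Complex.exp (Complex.I * ((((j:ℤ) - (l:ℤ) - (k:ℤ)) : ℤ) : ℂ) * ((x:ℂ) - (y:ℂ)))))
      = (2*Real.pi : ℂ) := by
    intro j hj
    rw [intervalIntegral.integral_finset_sum
      (f := fun (l:ℕ) (y:ℝ) => (Complex.exp (Complex.I * ((((j:ℤ) - (l:ℤ)) : ℤ) : ℂ) * ((x:ℂ) - (y:ℂ)))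
          - Complex.exp (Complex.I * ((((j:ℤ) - (l:ℤ) - (k:ℤ)) : ℤ) : ℂ) * ((x:ℂ) - (y:ℂ)))))
      (fun l _ => (hint _).sub (hint _))]
    rw [Finset.sum_congr rfl (fun l _ => h2 j l)]
    rw [Finset.mem_range] at hj
    have : ∀ l ∈ Finset.range k, ((if ((j:ℤ) - (l:ℤ)) = 0 then (2*Real.pi:ℂ) else 0)
          - (if ((j:ℤ) - (l:ℤ) - (k:ℤ)) = 0 then (2*Real.pi:ℂ) else 0))
        = (if j = l then (2*Real.pi:ℂ) else 0) := by
      intro l hl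
      rw [Finset.mem_range] at hl
      have hf : ¬ ((j:ℤ) - (l:ℤ) - (k:ℤ) = 0) := by omega
      have ht : ((j:ℤ) - (l:ℤ) = 0) ↔ j = l := by omega
      simp [ht, hf]
    rw [Finset.sum_congr rfl this, Finset.sum_ite_eq (Finset.range k) j]
    simp [hj]
  rw [Finset.sum_congr rfl h3, Finset.sum_const, Finset.card_range]
  simp [mul_comm]


/-- For `u(x) = e^{ikx}` with `k ≥ 1` and `σ ∈ {0,1}`,
`C_σ[u] = (k - σ) e^{ikx}`, where
`C_σ[u] = P₊[(1/(4π)) ∫₀^{2π} |u(x)-u(y)|²(u(x)-u(y))/(1-cos(x-y)) dy - σ|u(x)|²u(x)]`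
and `P₊` is (any linear map acting as) the projection onto strictly positive
Fourier modes, in particular fixing `x ↦ e^{ijx}` for `j ≥ 1`. -/
theorem stmt_7 (k : ℕ) (hk : 1 ≤ k) (σ : ℕ) (hσ : σ = 0 ∨ σ = 1)
    (Pplus : (ℝ → ℂ) →ₗ[ℂ] (ℝ → ℂ))
    (hP : ∀ j : ℤ, 1 ≤ j →
      Pplus (fun x : ℝ => Complex.exp (Complex.I * (j : ℂ) * (x : ℂ)))
        = fun x : ℝ => Complex.exp (Complex.I * (j : ℂ) * (x : ℂ))) :
    Pplus (fun x : ℝ =>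
        (1 / (4 * (Real.pi : ℂ))) *
          (∫ y in (0 : ℝ)..(2 * Real.pi),
            ((‖(Complex.exp (Complex.I * (k : ℂ) * (x : ℂ))
                - Complex.exp (Complex.I * (k : ℂ) * (y : ℂ)))‖ : ℝ) : ℂ) ^ 2
              * (Complex.exp (Complex.I * (k : ℂ) * (x : ℂ))
                - Complex.exp (Complex.I * (k : ℂ) * (y : ℂ)))
              / (((1 - Real.cos (x - y) : ℝ) : ℂ)))
        - (σ : ℂ) * ((‖(Complex.exp (Complex.I * (k : ℂ) * (x : ℂ)))‖ : ℝ) : ℂ) ^ 2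
            * Complex.exp (Complex.I * (k : ℂ) * (x : ℂ)))
      = fun x : ℝ => ((k : ℂ) - (σ : ℂ)) * Complex.exp (Complex.I * (k : ℂ) * (x : ℂ)) := by
  have hπ : (Real.pi : ℂ) ≠ 0 := by exact_mod_cast Real.pi_ne_zero
  have habs1 : ∀ x : ℝ, ((‖(Complex.exp (Complex.I * (k:ℂ) * (x:ℂ)))‖ : ℝ) : ℂ) = 1 := by
    intro x
    rw [show Complex.I * (k:ℂ) * (x:ℂ) = ((k*x : ℝ):ℂ) * Complex.I by push_cast; ring,
      Complex.norm_exp_ofReal_mul_I]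
    norm_num
  have hfun : (fun x : ℝ =>
        (1 / (4 * (Real.pi : ℂ))) *
          (∫ y in (0 : ℝ)..(2 * Real.pi),
            ((‖(Complex.exp (Complex.I * (k : ℂ) * (x : ℂ))
                - Complex.exp (Complex.I * (k : ℂ) * (y : ℂ)))‖ : ℝ) : ℂ) ^ 2
              * (Complex.exp (Complex.I * (k : ℂ) * (x : ℂ))
                - Complex.exp (Complex.I * (k : ℂ) * (y : ℂ)))
              / (((1 - Real.cos (x - y) : ℝ) : ℂ)))
        - (σ : ℂ) * ((‖(Complex.exp (Complex.I * (k : ℂ) * (x : ℂ)))‖ : ℝ) : ℂ) ^ 2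
            * Complex.exp (Complex.I * (k : ℂ) * (x : ℂ)))
      = ((k:ℂ) - (σ:ℂ)) • (fun x : ℝ => Complex.exp (Complex.I * (((k:ℕ):ℤ):ℂ) * (x:ℂ))) := by
    funext x
    have hI : (∫ y in (0 : ℝ)..(2 * Real.pi),
            ((‖(Complex.exp (Complex.I * (k : ℂ) * (x : ℂ))
                - Complex.exp (Complex.I * (k : ℂ) * (y : ℂ)))‖ : ℝ) : ℂ) ^ 2
              * (Complex.exp (Complex.I * (k : ℂ) * (x : ℂ))
                - Complex.exp (Complex.I * (k : ℂ) * (y : ℂ)))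
              / (((1 - Real.cos (x - y) : ℝ) : ℂ)))
        = 2 * Complex.exp (Complex.I * (k:ℂ) * (x:ℂ)) * ((k:ℂ) * (2*Real.pi)) := by
      rw [intervalIntegral.integral_congr
        (g := fun y : ℝ => 2 * Complex.exp (Complex.I * (k:ℂ) * (x:ℂ)) *
          ∑ j ∈ Finset.range k, ∑ l ∈ Finset.range k,
            (Complex.exp (Complex.I * ((((j:ℤ) - (l:ℤ)) : ℤ) : ℂ) * ((x:ℂ) - (y:ℂ)))
              - Complex.exp (Complex.I * ((((j:ℤ) - (l:ℤ) - (k:ℤ)) : ℤ) : ℂ) * ((x:ℂ) - (y:ℂ)))))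
        (fun y _ => pointwise k x y)]
      rw [intervalIntegral.integral_const_mul, integral_sum_eval]
    rw [hI, habs1 x]
    simp only [Pi.smul_apply, smul_eq_mul]
    rw [show ((((k:ℕ):ℤ):ℂ)) = ((k:ℕ):ℂ) by push_cast; ring]
    field_simp
    ring
  rw [hfun, map_smul, hP ((k:ℕ):ℤ) (by exact_mod_cast hk)]
  funext x
  simp only [Pi.smul_apply, smul_eq_mul]
  rw [show ((((k:ℕ):ℤ):ℂ)) = ((k:ℕ):ℂ) by push_cast; ring]
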